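/- Let U ∈ ℝ^{n×n} be the permutation matrix with U(1,1) = 1, U(2,n) = 1, U(i,i−1) = 1 for 3 ≤ i ≤ n, and all other entries 0. Then for every A ∈ 𝒜_U, the matrix UAU^{−1} is block lower triangular of the form [[I_2, 0],[Ǎ^{(21)}, Ǎ^{(2)}]], where I_2 is the 2×2 identity, Ǎ^{(2)} ∈ ℝ^{(n−2)×(n−2)}, and Ǎ^{(21)} ∈ ℝ^{(n−2)×2} has all entries zero except possibly Ǎ^{(21)}(1,1), which equals 0 or v_m·Δt/Δx, and Ǎ^{(21)}(n−2,2), which equals 0 or w·Δt/Δx. Equivalently: the first row of every A ∈ 𝒜_U is e_1^T, its n-th row is e_n^T, A(l,1) = 0 for all l ∉ {1,2}, and A(l,n) = 0 for all l ∉ {n−1,n}; thus in every unobservable mode the two boundary cells evolve autonomously with identity dynamics. -/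

import Mathlib

open Matrix Filter Finset

noncomputable section

/-- Loewner strict order `A < B`. -/
def loewnerLT {m : Type*} [Fintype m] (A B : Matrix m m ℝ) : Prop := (B - A).PosDef

/-- Loewner order `A ≤ B`. -/
def loewnerLE {m : Type*} [Fintype m] (A B : Matrix m m ℝ) : Prop := (B - A).PosSemidef

/-- smallest (real) eigenvalue of a matrix -/
def lamMin {N : ℕ} (M : Matrix (Fin N) (Fin N) ℝ) : ℝ :=
  sInf {t : ℝ | ∃ v : Fin N → ℝ, v ≠ 0 ∧ M.mulVec v = t • v}

/-- largest (real) eigenvalue of a matrix -/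
def lamMax {N : ℕ} (M : Matrix (Fin N) (Fin N) ℝ) : ℝ :=
  sSup {t : ℝ | ∃ v : Fin N → ℝ, v ≠ 0 ∧ M.mulVec v = t • v}

/-- spectral norm (ℓ²-operator norm) of a square matrix -/
def matSpectralNorm {N : ℕ} (M : Matrix (Fin N) (Fin N) ℝ) : ℝ :=
  ‖Matrix.toEuclideanCLM (𝕜 := ℝ) M‖

/-- largest singular value -/
def sigmaMax {N : ℕ} (M : Matrix (Fin N) (Fin N) ℝ) : ℝ := matSpectralNorm M

/-- maximum absolute row-sum matrix norm -/
def rowSumNorm {m n : ℕ} (M : Matrix (Fin m) (Fin n) ℝ) : ℝ :=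
  ⨆ i : Fin m, ∑ j, |M i j|

/-- Euclidean norm of a vector -/
def euclNorm {N : ℕ} (v : Fin N → ℝ) : ℝ := Real.sqrt (∑ j, (v j) ^ 2)

/-- the free-flow mode matrix A_FF -/
def matAFF (N : ℕ) (θv : ℝ) : Matrix (Fin N) (Fin N) ℝ :=
  Matrix.of fun i j =>
    if (i : ℕ) = 0 ∧ (j : ℕ) = 0 then 1
    else if i = j then 1 - θv
    else if (i : ℕ) = (j : ℕ) + 1 then θv
    else 0

/-- the congestion mode matrix A_CC -/
def matACC (N : ℕ) (θw : ℝ) : Matrix (Fin N) (Fin N) ℝ :=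
  Matrix.of fun i j =>
    if (i : ℕ) = N - 1 ∧ (j : ℕ) = N - 1 then 1
    else if i = j then 1 - θw
    else if (j : ℕ) = (i : ℕ) + 1 then θw
    else 0

/-- the congestion–freeflow mode matrix A_CF^s = diag(Δ_s, Θ_{N−s}) -/
def matACF (N s : ℕ) (θv θw : ℝ) : Matrix (Fin N) (Fin N) ℝ :=
  Matrix.of fun i j =>
    if (i : ℕ) < s ∧ (j : ℕ) < s then
      (if i = j then 1 - θw else if (j : ℕ) = (i : ℕ) + 1 then θw else 0)
    else if s ≤ (i : ℕ) ∧ s ≤ (j : ℕ) then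
      (if i = j then 1 - θv else if (i : ℕ) = (j : ℕ) + 1 then θv else 0)
    else 0

/-- set of observable-mode state transition matrices 𝒜_O -/
def setAO (N : ℕ) (θv θw : ℝ) : Set (Matrix (Fin N) (Fin N) ℝ) :=
  {matAFF N θv, matACC N θw} ∪ {M | ∃ s, 1 ≤ s ∧ s ≤ N - 1 ∧ M = matACF N s θv θw}

/-- boundary output matrix H_b, rows e_1ᵀ and e_nᵀ -/
def matHb (N : ℕ) : Matrix (Fin 2) (Fin N) ℝ :=
  Matrix.of fun i j =>
    if (i : ℕ) = 0 ∧ (j : ℕ) = 0 then 1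
    else if (i : ℕ) = 1 ∧ (j : ℕ) = N - 1 then 1
    else 0

/-- standing assumption on output matrices: pairwise distinct standard basis rows,
including e_1ᵀ and e_nᵀ -/
def standingH {mk N : ℕ} (H : Matrix (Fin mk) (Fin N) ℝ) : Prop :=
  (∀ p : Fin mk, ∃ l : Fin N, H p = fun j => if j = l then 1 else 0) ∧
  (∀ p q : Fin mk, H p = H q → p = q) ∧
  (∃ p : Fin mk, H p = fun j : Fin N => if (j : ℕ) = 0 then 1 else 0) ∧
  (∃ p : Fin mk, H p = fun j : Fin N => if (j : ℕ) = N - 1 then 1 else 0)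

/-- ascending product of inverses  M_lo⁻¹ · M_{lo+1}⁻¹ ⋯ M_hi⁻¹ -/
def prodInvAsc {N : ℕ} (M : ℕ → Matrix (Fin N) (Fin N) ℝ) (lo hi : ℕ) :
    Matrix (Fin N) (Fin N) ℝ :=
  ((List.range (hi + 1 - lo)).map (fun t => (M (lo + t))⁻¹)).prod

/-- descending product  M_hi · M_{hi−1} ⋯ M_lo -/
def prodDesc {N : ℕ} (M : ℕ → Matrix (Fin N) (Fin N) ℝ) (hi lo : ℕ) :
    Matrix (Fin N) (Fin N) ℝ :=
  ((List.range (hi + 1 - lo)).map (fun t => M (hi - t))).prod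

/-- a_𝓘 -/
def aI (N : ℕ) (θv θw r2 : ℝ) : ℝ :=
  r2⁻¹ * sInf {t : ℝ | ∃ M : ℕ → Matrix (Fin N) (Fin N) ℝ,
    (∀ ι, 1 ≤ ι → ι ≤ max 1 (N - 2) → M ι ∈ setAO N θv θw) ∧
    t = lamMin ((matHb N)ᵀ * matHb N +
      ∑ ι ∈ Finset.Icc 1 (max 1 (N - 2)),
        (prodInvAsc M ι (max 1 (N - 2)))ᵀ * (matHb N)ᵀ * matHb N *
          prodInvAsc M ι (max 1 (N - 2)))}

/-- b_𝓘 -/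
def bI (N : ℕ) (θv θw r1 : ℝ) : ℝ :=
  r1⁻¹ * sSup {t : ℝ | ∃ M : ℕ → Matrix (Fin N) (Fin N) ℝ,
    (∀ ι, 1 ≤ ι → ι ≤ max 1 (N - 2) → M ι ∈ setAO N θv θw) ∧
    t = lamMax (1 +
      ∑ ι ∈ Finset.Icc 1 (max 1 (N - 2)),
        (prodInvAsc M ι (max 1 (N - 2)))ᵀ * prodInvAsc M ι (max 1 (N - 2)))}

/-- a_𝓒 -/
def aC (N : ℕ) (θv θw q1 : ℝ) : ℝ :=
  q1 * sInf {t : ℝ | ∃ M : ℕ → Matrix (Fin N) (Fin N) ℝ,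
    (∀ ι, 1 ≤ ι → ι ≤ max 1 (N - 2) → M ι ∈ setAO N θv θw) ∧
    t = lamMin (1 +
      ∑ ι ∈ Finset.Icc 1 (max 1 (N - 2) - 1),
        prodDesc M (max 1 (N - 2) - 1) ι * (prodDesc M (max 1 (N - 2) - 1) ι)ᵀ)}

/-- b_𝓒 -/
def bC (N : ℕ) (θv θw q2 : ℝ) : ℝ :=
  q2 * sSup {t : ℝ | ∃ M : ℕ → Matrix (Fin N) (Fin N) ℝ,
    (∀ ι, 1 ≤ ι → ι ≤ max 1 (N - 2) → M ι ∈ setAO N θv θw) ∧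
    t = lamMax (1 +
      ∑ ι ∈ Finset.Icc 1 (max 1 (N - 2) - 1),
        prodDesc M (max 1 (N - 2) - 1) ι * (prodDesc M (max 1 (N - 2) - 1) ι)ᵀ)}

/-- constant c₁ -/
def cLow (N : ℕ) (θv θw q1 q2 r1 r2 : ℝ) : ℝ :=
  min (aI N θv θw r2) (aC N θv θw q1) /
    (1 + min (aI N θv θw r2) (aC N θv θw q1) * max (bI N θv θw r1) (bC N θv θw q2))

/-- constant c₂ -/
def cHigh (N : ℕ) (θv θw q1 q2 r1 r2 : ℝ) : ℝ :=
  (1 + min (aI N θv θw r2) (aC N θv θw q1) * max (bI N θv θw r1) (bC N θv θw q2)) /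
    min (aI N θv θw r2) (aC N θv θw q1)


/-- the unobservable FC-mode matrix `A(s̃,s̄)` with `s̃ = s`, `s̄ = N−1−s`,
for `1 ≤ s ≤ N−2` -/
def matAU (N s : ℕ) (θv θw : ℝ) : Matrix (Fin N) (Fin N) ℝ :=
  Matrix.of fun i j =>
    if (i : ℕ) < s then
      (if (i : ℕ) = 0 ∧ (j : ℕ) = 0 then 1
       else if i = j then 1 - θv
       else if (i : ℕ) = (j : ℕ) + 1 ∧ (j : ℕ) < s then θv
       else 0)
    else if (i : ℕ) = s then
      (if (j : ℕ) + 1 = s then θv else if (j : ℕ) = s then 1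
       else if (j : ℕ) = s + 1 then θw else 0)
    else
      (if (i : ℕ) = N - 1 ∧ (j : ℕ) = N - 1 then 1
       else if i = j then 1 - θw
       else if (j : ℕ) = (i : ℕ) + 1 then θw
       else 0)

/-- `diag(Θ̂_{N−2}, 1)` (mode FC1 with `s = n−1`) -/
def matAUtop (N : ℕ) (θv : ℝ) : Matrix (Fin N) (Fin N) ℝ :=
  Matrix.of fun i j =>
    if (i : ℕ) = N - 1 then (if (j : ℕ) = N - 1 then 1 else 0)
    else if (i : ℕ) = 0 ∧ (j : ℕ) = 0 then 1
    else if i = j then 1 - θv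
    else if (i : ℕ) = (j : ℕ) + 1 then θv
    else 0

/-- `diag(1, Δ̂_{N−2})` (mode FC2 with `s = 1`) -/
def matAUbot (N : ℕ) (θw : ℝ) : Matrix (Fin N) (Fin N) ℝ :=
  Matrix.of fun i j =>
    if (i : ℕ) = 0 then (if (j : ℕ) = 0 then 1 else 0)
    else if (i : ℕ) = N - 1 ∧ (j : ℕ) = N - 1 then 1
    else if i = j then 1 - θw
    else if (j : ℕ) = (i : ℕ) + 1 then θw
    else 0

/-- set of unobservable-mode state transition matrices 𝒜_U -/
def setAU (N : ℕ) (θv θw : ℝ) : Set (Matrix (Fin N) (Fin N) ℝ) :=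
  {M | ∃ s, 1 ≤ s ∧ s ≤ N - 2 ∧ M = matAU N s θv θw} ∪
    {matAUtop N θv, matAUbot N θw}

/-- the permutation matrix `U` reordering the state as `(ρ¹, ρⁿ, ρ², …, ρ^{n−1})` -/
def matU (N : ℕ) : Matrix (Fin N) (Fin N) ℝ :=
  Matrix.of fun i j =>
    if (i : ℕ) = 0 ∧ (j : ℕ) = 0 then 1
    else if (i : ℕ) = 1 ∧ (j : ℕ) = N - 1 then 1
    else if 2 ≤ (i : ℕ) ∧ (j : ℕ) + 1 = (i : ℕ) then 1
    else 0

namespace Stmt17Aux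

variable {n : ℕ}

/-- the permutation underlying `matU`: 0 ↦ 0, 1 ↦ n−1, i ↦ i−1 for i ≥ 2 -/
def sig (n : ℕ) (hn : 2 ≤ n) : Fin n → Fin n := fun i =>
  if (i : ℕ) = 1 then ⟨n - 1, Nat.sub_lt (Nat.zero_lt_of_lt i.isLt) Nat.one_pos⟩
  else if (i : ℕ) = 0 then ⟨0, Nat.zero_lt_of_lt i.isLt⟩
  else ⟨(i : ℕ) - 1, by omega⟩

lemma sig_val (hn : 2 ≤ n) (i : Fin n) :
    ((sig n hn i : Fin n) : ℕ) =
      if (i : ℕ) = 1 then n - 1 else if (i : ℕ) = 0 then 0 else (i : ℕ) - 1 := by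
  unfold sig; split_ifs <;> rfl

lemma sig_spec (hn : 2 ≤ n) (i k : Fin n) :
    matU n i k = if k = sig n hn i then 1 else 0 := by
  have hi := i.isLt
  have hk := k.isLt
  have h := sig_val hn i
  simp only [matU, Matrix.of_apply, Fin.ext_iff, h]
  split_ifs <;> first | rfl | (exfalso; omega)

lemma matU_mul_apply (hn : 2 ≤ n) (B : Matrix (Fin n) (Fin n) ℝ) (i j : Fin n) :
    (matU n * B) i j = B (sig n hn i) j := by
  simp [Matrix.mul_apply, sig_spec hn, ite_mul, one_mul, zero_mul]

lemma mul_matU_transpose_apply (hn : 2 ≤ n) (B : Matrix (Fin n) (Fin n) ℝ) (i j : Fin n) :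
    (B * (matU n)ᵀ) i j = B i (sig n hn j) := by
  simp [Matrix.mul_apply, Matrix.transpose_apply, sig_spec hn, mul_ite, mul_one, mul_zero]

lemma matU_mul_transpose (hn : 2 ≤ n) : matU n * (matU n)ᵀ = (1 : Matrix (Fin n) (Fin n) ℝ) := by
  ext i j
  rw [mul_matU_transpose_apply hn, sig_spec hn, Matrix.one_apply]
  have hi := i.isLt
  have hj := j.isLt
  have h1 := sig_val hn i
  have h2 := sig_val hn j
  simp only [Fin.ext_iff, h1, h2]
  split_ifs <;> first | rfl | (exfalso; omega)

lemma conj_apply (hn : 2 ≤ n) (A : Matrix (Fin n) (Fin n) ℝ) (i j : Fin n) :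
    (matU n * A * (matU n)⁻¹) i j = A (sig n hn i) (sig n hn j) := by
  rw [Matrix.inv_eq_right_inv (matU_mul_transpose hn), mul_matU_transpose_apply hn,
    matU_mul_apply hn]

lemma structA (hn : 2 ≤ n) {θv θw : ℝ} {A : Matrix (Fin n) (Fin n) ℝ}
    (hA : A ∈ setAU n θv θw) :
    (∀ i j : Fin n, (i : ℕ) = 0 → A i j = if (j : ℕ) = 0 then 1 else 0) ∧
    (∀ i j : Fin n, (i : ℕ) = n - 1 → A i j = if (j : ℕ) = n - 1 then 1 else 0) ∧
    (∀ i j : Fin n, (j : ℕ) = 0 → (i : ℕ) ≠ 0 → (i : ℕ) ≠ 1 → A i j = 0) ∧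
    (∀ i j : Fin n, (j : ℕ) = n - 1 → (i : ℕ) ≠ n - 2 → (i : ℕ) ≠ n - 1 → A i j = 0) ∧
    (∀ i j : Fin n, (i : ℕ) = 1 → (j : ℕ) = 0 → A i j = 0 ∨ A i j = θv) ∧
    (∀ i j : Fin n, (i : ℕ) = n - 2 → (j : ℕ) = n - 1 → A i j = 0 ∨ A i j = θw) := by
  simp only [setAU, Set.mem_union, Set.mem_setOf_eq, Set.mem_insert_iff,
    Set.mem_singleton_iff] at hA
  rcases hA with ⟨s, hs1, hs2, rfl⟩ | rfl | rfl <;>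
    refine ⟨?_, ?_, ?_, ?_, ?_, ?_⟩ <;>
      rintro ⟨iv, hi⟩ ⟨jv, hj⟩ <;>
        simp only [matAU, matAUtop, matAUbot, Matrix.of_apply, Fin.mk.injEq] <;>
          intros <;>
            split_ifs <;>
              first | rfl | exact Or.inl rfl | exact Or.inr rfl | (exfalso; omega)

end Stmt17Aux

/-- structure of the unobservable modes under the Kalman observability
canonical transformation: `U A U⁻¹` is block lower triangular with top-left block
`I₂`, and the coupling block `Ǎ^{(21)}` is zero except possibly at `(1,1)`
(value `v_mΔt/Δx`) and `(n−2,2)` (value `wΔt/Δx`); equivalently, the first row of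
`A` is `e₁ᵀ`, its `n`-th row is `e_nᵀ`, `A(l,1) = 0` for `l ∉ {1,2}` and
`A(l,n) = 0` for `l ∉ {n−1,n}`. -/
theorem stmt17
    (n : ℕ) (hn : 2 ≤ n)
    (Δt Δx vm w : ℝ) (hΔt : 0 < Δt) (hΔx : 0 < Δx) (hvm : 0 < vm) (hw : 0 < w)
    (hv1 : vm * Δt / Δx < 1) (hw1 : w * Δt / Δx < 1) :
    ∀ A ∈ setAU n (vm * Δt / Δx) (w * Δt / Δx),
      -- block lower triangular form of U A U⁻¹ with identity top-left 2×2 block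
      ((∀ i j : Fin n, (i : ℕ) < 2 →
          (matU n * A * (matU n)⁻¹) i j = if i = j then 1 else 0) ∧
        (∀ i j : Fin n, 2 ≤ (i : ℕ) → (j : ℕ) < 2 →
          (((i : ℕ) = 2 ∧ (j : ℕ) = 0 →
              (matU n * A * (matU n)⁻¹) i j = 0 ∨
                (matU n * A * (matU n)⁻¹) i j = vm * Δt / Δx) ∧
            ((i : ℕ) = n - 1 ∧ (j : ℕ) = 1 →
              (matU n * A * (matU n)⁻¹) i j = 0 ∨
                (matU n * A * (matU n)⁻¹) i j = w * Δt / Δx) ∧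
            (¬((i : ℕ) = 2 ∧ (j : ℕ) = 0) → ¬((i : ℕ) = n - 1 ∧ (j : ℕ) = 1) →
              (matU n * A * (matU n)⁻¹) i j = 0)))) ∧
      -- equivalent row/column description of A itself
      ((∀ j : Fin n, A ⟨0, by omega⟩ j = if (j : ℕ) = 0 then 1 else 0) ∧
        (∀ j : Fin n, A ⟨n - 1, by omega⟩ j = if (j : ℕ) = n - 1 then 1 else 0) ∧
        (∀ i : Fin n, (i : ℕ) ≠ 0 → (i : ℕ) ≠ 1 → A i ⟨0, by omega⟩ = 0) ∧
        (∀ i : Fin n, (i : ℕ) ≠ n - 2 → (i : ℕ) ≠ n - 1 → A i ⟨n - 1, by omega⟩ = 0)) := by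
  intro A hA
  obtain ⟨hP1, hP2, hP3, hP4, hP5, hP6⟩ := Stmt17Aux.structA hn hA
  constructor
  · constructor
    · intro i j hi2
      have hi := i.isLt
      have hj := j.isLt
      rw [Stmt17Aux.conj_apply hn]
      have hsj := Stmt17Aux.sig_val hn j
      rcases (by omega : (i : ℕ) = 0 ∨ (i : ℕ) = 1) with h | h
      · rw [hP1 _ _ (by rw [Stmt17Aux.sig_val hn]; split_ifs <;> omega)]
        simp only [Fin.ext_iff, hsj]
        split_ifs <;> first | rfl | (exfalso; omega)
      · rw [hP2 _ _ (by rw [Stmt17Aux.sig_val hn]; split_ifs <;> omega)]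
        simp only [Fin.ext_iff, hsj]
        split_ifs <;> first | rfl | (exfalso; omega)
    · intro i j hi2 hj2
      have hi := i.isLt
      have hj := j.isLt
      refine ⟨?_, ?_, ?_⟩
      · rintro ⟨h2, h0⟩
        rw [Stmt17Aux.conj_apply hn]
        exact hP5 _ _ (by rw [Stmt17Aux.sig_val hn]; split_ifs <;> omega)
          (by rw [Stmt17Aux.sig_val hn]; split_ifs <;> omega)
      · rintro ⟨hN, h1⟩
        rw [Stmt17Aux.conj_apply hn]
        exact hP6 _ _ (by rw [Stmt17Aux.sig_val hn]; split_ifs <;> omega)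
          (by rw [Stmt17Aux.sig_val hn]; split_ifs <;> omega)
      · intro hne1 hne2
        rw [Stmt17Aux.conj_apply hn]
        rcases (by omega : (j : ℕ) = 0 ∨ (j : ℕ) = 1) with h | h
        · exact hP3 _ _ (by rw [Stmt17Aux.sig_val hn]; split_ifs <;> omega)
            (by rw [Stmt17Aux.sig_val hn]; split_ifs <;> omega)
            (by rw [Stmt17Aux.sig_val hn]; split_ifs <;> omega)
        · exact hP4 _ _ (by rw [Stmt17Aux.sig_val hn]; split_ifs <;> omega)
            (by rw [Stmt17Aux.sig_val hn]; split_ifs <;> omega)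
            (by rw [Stmt17Aux.sig_val hn]; split_ifs <;> omega)
  · exact ⟨fun j => hP1 _ j rfl, fun j => hP2 _ j rfl,
      fun i h0 h1 => hP3 i _ rfl h0 h1, fun i h0 h1 => hP4 i _ rfl h0 h1⟩


end
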